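/- For every computable linear order (P, ≤_P) of order type ω + ω* with no computable infinite ascending or descending sequence, the sets S*(P) (the ω-part) and L*(P) (the ω*-part) are both hyperimmune. -/

import Mathlib

open Classical

/-- The characteristic function of a set of naturals, as a partial function. -/
noncomputable def CharFun (X : Set ℕ) : ℕ →. ℕ :=
  fun n => Part.some (if n ∈ X then 1 else 0)

/-- Partial recursiveness relative to an oracle `O`. -/
inductive RecIn (O : ℕ →. ℕ) : (ℕ →. ℕ) → Prop
  | oracle : RecIn O O
  | zero : RecIn O (fun _ => Part.some 0)
  | succ : RecIn O (fun n => Part.some n.succ)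
  | left : RecIn O (fun n => Part.some n.unpair.1)
  | right : RecIn O (fun n => Part.some n.unpair.2)
  | pair {f g} : RecIn O f → RecIn O g →
      RecIn O (fun n => Nat.pair <$> f n <*> g n)
  | comp {f g} : RecIn O f → RecIn O g →
      RecIn O (fun n => g n >>= f)
  | prec {f g} : RecIn O f → RecIn O g →
      RecIn O (Nat.unpaired fun a n =>
        n.rec (f a) fun y IH => do {let i ← IH; g (Nat.pair a (Nat.pair y i))})
  | rfind {f} : RecIn O f →
      RecIn O (fun a => Nat.rfind fun n => (fun m => decide (m = 0)) <$> f (Nat.pair a n))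

/-- A (typed) function is computable in oracle `O`. -/
def ComputableInOracle {α β : Type} [Primcodable α] [Primcodable β] (O : ℕ →. ℕ) (f : α → β) : Prop :=
  RecIn O (fun n => Part.some (Encodable.encode (Option.map f (Encodable.decode (α := α) n))))

/-- A set of naturals is computable in oracle `O`. -/
def SetComputableIn (O : ℕ →. ℕ) (X : Set ℕ) : Prop :=
  RecIn O (CharFun X)

/-- A (typed) predicate is computably enumerable in oracle `O`. -/
def CEIn {α : Type} [Primcodable α] (O : ℕ →. ℕ) (p : α → Prop) : Prop :=
  ∃ f : ℕ →. ℕ, RecIn O f ∧ ∀ a : α, (f (Encodable.encode a)).Dom ↔ p a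

/-- A (typed) predicate is computably enumerable. -/
def CEPred {α : Type} [Primcodable α] (p : α → Prop) : Prop :=
  ∃ f : α →. Unit, Partrec f ∧ ∀ a, (f a).Dom ↔ p a

/-- A set of naturals is co-c.e. -/
def CoCE (A : Set ℕ) : Prop := CEPred (fun n => n ∉ A)

/-- The members of an array are mutually disjoint. -/
def ArrayDisjoint (F : ℕ → Finset ℕ) : Prop :=
  ∀ i j, i ≠ j → Disjoint (F i) (F j)

/-- An array traces a set `A` if each of its members meets `A`. -/
def Traces (F : ℕ → Finset ℕ) (A : Set ℕ) : Prop :=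
  ∀ i, ∃ x ∈ F i, x ∈ A

/-- A set is hyperimmune if it is infinite and not traced by any computable array. -/
def Hyperimmune (A : Set ℕ) : Prop :=
  A.Infinite ∧ ∀ F : ℕ → Finset ℕ, Computable F → ArrayDisjoint F → ¬ Traces F A

/-- A set is hyperimmune relative to the oracle `O`. -/
def HyperimmuneIn (O : ℕ →. ℕ) (A : Set ℕ) : Prop :=
  A.Infinite ∧ ∀ F : ℕ → Finset ℕ, ComputableInOracle O F → ArrayDisjoint F → ¬ Traces F A

/-- A set is immune if it is infinite and has no infinite computable subset. -/
def Immune (A : Set ℕ) : Prop :=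
  A.Infinite ∧ ∀ W : Set ℕ, W.Infinite → ComputablePred (· ∈ W) → ¬ W ⊆ A

/-- A set is immune relative to the oracle `O`. -/
def ImmuneIn (O : ℕ →. ℕ) (A : Set ℕ) : Prop :=
  A.Infinite ∧ ∀ W : Set ℕ, W.Infinite → SetComputableIn O W → ¬ W ⊆ A

/-- The effective join of two sets of naturals. -/
def SetJoin (Y Z : Set ℕ) : Set ℕ :=
  {n | if n % 2 = 0 then n / 2 ∈ Y else n / 2 ∈ Z}

/-- `X` is Turing reducible to `Z`. -/
def TuringLE (X Z : Set ℕ) : Prop := SetComputableIn (CharFun Z) X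

/-- x is small in the partial order R: below all but finitely many elements. -/
def OrdSmall (R : ℕ → ℕ → Prop) (x : ℕ) : Prop := {y | ¬ R x y}.Finite

/-- x is large in the partial order R: above all but finitely many elements. -/
def OrdLarge (R : ℕ → ℕ → Prop) (x : ℕ) : Prop := {y | ¬ R y x}.Finite

/-- x is isolated in the partial order R: incomparable with all but finitely many. -/
def OrdIsolated (R : ℕ → ℕ → Prop) (x : ℕ) : Prop := {y | R x y ∨ R y x}.Finite


section HyperimmuneHelpers

open Computable Denumerable Encodable

private lemma inf_exists_gt {s : Set ℕ} (h : s.Infinite) (a : ℕ) : ∃ b ∈ s, a < b := by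
  by_contra h'
  push_neg at h'
  exact h (Set.Finite.subset (Set.finite_Iic a) h')

private lemma computable_find {p : ℕ → ℕ → Bool} (hp : Computable₂ p)
    (H : ∀ a, ∃ n, p a n = true) :
    Computable fun a => Nat.find (H a) := by
  refine (Partrec.rfind hp.partrec₂).of_eq_tot fun a => ?_
  rw [Nat.mem_rfind]
  constructor
  · simpa using Nat.find_spec (H a)
  · intro m hm
    simpa using Nat.find_min (H a) hm

private lemma computable_iter {s : ℕ → ℕ} (hs : Computable s) (a0 : ℕ) :
    Computable fun n => (Nat.rec a0 (fun _ ih => s ih) n : ℕ) := by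
  exact Computable.nat_rec Computable.id (Computable.const a0)
    ((hs.comp (Computable.snd.comp Computable.snd)).to₂)

private lemma computable_range_mem {b : ℕ → ℕ} (hb : Computable b) (hm : StrictMono b) :
    ∃ W : ℕ → Bool, Computable W ∧ ∀ x, (W x = true ↔ x ∈ Set.range b) := by
  refine ⟨fun x => Nat.rec false (fun k ih => ih || (b k == x)) (x + 1), ?_, ?_⟩
  · exact Computable.nat_rec Computable.succ (Computable.const false)
      ((Primrec.or.to_comp.comp (Computable.snd.comp Computable.snd)
        (Primrec.beq.to_comp.comp (hb.comp (Computable.fst.comp Computable.snd))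
          Computable.fst)).to₂)
  · intro x
    have key : ∀ m : ℕ, (Nat.rec false (fun k ih => ih || (b k == x)) m = true)
        ↔ ∃ k < m, b k = x := by
      intro m
      induction m with
      | zero => simp
      | succ m ih =>
        simp only [Nat.lt_succ_iff_lt_or_eq, Bool.or_eq_true, beq_iff_eq, ih]
        constructor
        · rintro (⟨k, hk, rfl⟩ | h)
          · exact ⟨k, Or.inl hk, rfl⟩
          · exact ⟨m, Or.inr rfl, h⟩
        · rintro ⟨k, hk | rfl, rfl⟩
          · exact Or.inl ⟨k, hk, rfl⟩
          · exact Or.inr rfl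
    have h2 : (∃ k < x + 1, b k = x) ↔ x ∈ Set.range b := by
      constructor
      · rintro ⟨k, _, rfl⟩; exact Set.mem_range_self k
      · rintro ⟨k, rfl⟩
        exact ⟨k, Nat.lt_succ_of_le hm.le_apply, rfl⟩
    exact (key (x + 1)).trans h2

private lemma praise : Primrec fun L : List ℕ => Denumerable.raise' L 0 := by
  have fold_eq : ∀ (L : List ℕ) (n : ℕ) (acc : List ℕ),
      (L.foldl (fun s m => (m + s.1 + 1, s.2 ++ [m + s.1])) (n, acc)).2
        = acc ++ Denumerable.raise' L n := by
    intro L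
    induction L with
    | nil => intro n acc; simp [Denumerable.raise']
    | cons m t ih => intro n acc; simp [Denumerable.raise', ih]
  have h1 : Primrec fun s : (List ℕ) × ((ℕ × List ℕ) × ℕ) => s.2.2 + s.2.1.1 + 1 :=
    Primrec.nat_add.comp (Primrec.nat_add.comp (Primrec.snd.comp Primrec.snd)
      (Primrec.fst.comp (Primrec.fst.comp Primrec.snd))) (Primrec.const 1)
  have h2 : Primrec fun s : (List ℕ) × ((ℕ × List ℕ) × ℕ) => s.2.1.2 ++ [s.2.2 + s.2.1.1] :=
    Primrec.list_concat.comp (Primrec.snd.comp (Primrec.fst.comp Primrec.snd))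
      (Primrec.nat_add.comp (Primrec.snd.comp Primrec.snd)
        (Primrec.fst.comp (Primrec.fst.comp Primrec.snd)))
  have hfold := Primrec.list_foldl (Primrec.id (α := List ℕ))
    (Primrec.const ((0 : ℕ), ([] : List ℕ))) (h1.pair h2).to₂
  exact (Primrec.snd.comp hfold).of_eq fun L => (fold_eq L 0 []).trans (by simp)

private lemma mem_ofNat_finset (m x : ℕ) :
    x ∈ ofNat (Finset ℕ) m ↔ x ∈ Denumerable.raise' (ofNat (List ℕ) m) 0 := by
  have h : ofNat (Finset ℕ) m = Finset.map (Denumerable.eqv ℕ).symm.toEmbedding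
      (Denumerable.raise'Finset (ofNat (List ℕ) m) 0) := Denumerable.ofNat_of_decode rfl
  rw [h]
  simp [Finset.mem_map, Denumerable.raise'Finset, Denumerable.eqv]
  exact Iff.rfl

private lemma buildAsc (R : ℕ → ℕ → Prop) (d : ℕ × ℕ → Bool) (hd : Computable d)
    (hdR : ∀ x y, d (x, y) = true ↔ R x y)
    (htrans : ∀ {x y z : ℕ}, R x y → R y z → R x z)
    (W : ℕ → Bool) (hW : Computable W) (hWinf : {x | W x = true}.Infinite)
    (hWS : ∀ x, W x = true → OrdSmall R x) :
    ∃ T : Set ℕ, T.Infinite ∧ ComputablePred (· ∈ T) ∧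
      ∀ x ∈ T, ∀ y ∈ T, x < y → R x y ∧ x ≠ y := by
  classical
  set p : ℕ → ℕ → Bool :=
    fun a n => (W n && decide (a < n)) && (bif W a then d (a, n) else true) with hp_def
  have hp : Computable₂ p := by
    have c1 : Computable fun q : ℕ × ℕ => W q.2 := hW.comp Computable.snd
    have c2 : Computable fun q : ℕ × ℕ => decide (q.1 < q.2) :=
      Primrec.nat_lt.decide.to_comp.comp Computable.fst Computable.snd
    have c3 : Computable fun q : ℕ × ℕ => (bif W q.1 then d q else true) :=
      Computable.cond (hW.comp Computable.fst) hd (Computable.const true)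
    exact (Primrec.and.to_comp.comp (Primrec.and.to_comp.comp c1 c2) c3).to₂
  have p_iff : ∀ a n, p a n = true ↔ (W n = true ∧ a < n ∧ (W a = true → R a n)) := by
    intro a n
    cases hWa : W a <;>
      simp [hp_def, hWa, hdR, decide_eq_true_iff, Bool.and_eq_true, and_assoc]
  have H : ∀ a, ∃ n, p a n = true := by
    intro a
    cases hWa : W a with
    | false =>
      obtain ⟨n, hn, han⟩ := inf_exists_gt hWinf a
      exact ⟨n, (p_iff a n).mpr ⟨hn, han, fun h => by rw [hWa] at h; exact absurd h (by simp)⟩⟩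
    | true =>
      obtain ⟨n, hn, han⟩ := inf_exists_gt (hWinf.diff (hWS a hWa)) a
      exact ⟨n, (p_iff a n).mpr ⟨hn.1, han, fun _ => not_not.mp hn.2⟩⟩
  set step : ℕ → ℕ := fun a => Nat.find (H a) with hstep_def
  have hstep : Computable step := computable_find hp H
  have hsW : ∀ a, W (step a) = true := fun a => ((p_iff a _).mp (Nat.find_spec (H a))).1
  have hsgt : ∀ a, a < step a := fun a => ((p_iff a _).mp (Nat.find_spec (H a))).2.1
  have hsR : ∀ a, W a = true → R a (step a) :=
    fun a h => ((p_iff a _).mp (Nat.find_spec (H a))).2.2 h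
  set b : ℕ → ℕ := fun n => Nat.rec (step 0) (fun _ ih => step ih) n with hb_def
  have hbc : Computable b := computable_iter hstep (step 0)
  have hbW : ∀ n, W (b n) = true := by
    intro n
    induction n with
    | zero => exact hsW 0
    | succ n _ => exact hsW (b n)
  have hbm : StrictMono b := strictMono_nat_of_lt_succ fun n => hsgt (b n)
  have hchain : ∀ m k, R (b m) (b (m + k + 1)) := by
    intro m k
    induction k with
    | zero => exact hsR (b m) (hbW m)
    | succ k ih => exact htrans ih (hsR (b (m + k + 1)) (hbW (m + k + 1)))
  obtain ⟨V, hV, hViff⟩ := computable_range_mem hbc hbm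
  refine ⟨Set.range b, Set.infinite_range_of_injective hbm.injective, ?_, ?_⟩
  · exact ComputablePred.computable_iff.mpr
      ⟨V, hV, funext fun x => propext (hViff x).symm⟩
  · rintro x ⟨m, rfl⟩ y ⟨n, rfl⟩ hxy
    have hmn : m < n := hbm.lt_iff_lt.mp hxy
    refine ⟨?_, Nat.ne_of_lt hxy⟩
    have he : n = m + (n - m - 1) + 1 := by omega
    rw [he]
    exact hchain m _

private lemma half (R : ℕ → ℕ → Prop) (d : ℕ × ℕ → Bool) (hd : Computable d)
    (hdR : ∀ x y, d (x, y) = true ↔ R x y)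
    (hrefl : ∀ x, R x x)
    (htrans : ∀ {x y z : ℕ}, R x y → R y z → R x z)
    (htot : ∀ x y, R x y ∨ R y x)
    (htype : ∀ x, OrdSmall R x ∨ OrdLarge R x)
    (hnone : ¬ ∃ S : Set ℕ, S.Infinite ∧ ComputablePred (· ∈ S) ∧
      ((∀ x ∈ S, ∀ y ∈ S, x < y → R x y ∧ x ≠ y) ∨
        (∀ x ∈ S, ∀ y ∈ S, x < y → R y x ∧ x ≠ y))) :
    Hyperimmune {x | OrdSmall R x} := by
  classical
  have noAsc : ∀ W : ℕ → Bool, Computable W → {x | W x = true}.Infinite →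
      (∀ x, W x = true → OrdSmall R x) → False := by
    intro W hW hWinf hWS
    obtain ⟨T, hT1, hT2, hT3⟩ := buildAsc R d hd hdR @htrans W hW hWinf hWS
    exact hnone ⟨T, hT1, hT2, Or.inl hT3⟩
  have noDesc : ∀ W : ℕ → Bool, Computable W → {x | W x = true}.Infinite →
      (∀ x, W x = true → OrdLarge R x) → False := by
    intro W hW hWinf hWS
    obtain ⟨T, hT1, hT2, hT3⟩ := buildAsc (fun x y => R y x)
      (fun q => d (q.2, q.1)) (hd.comp (Computable.snd.pair Computable.fst))
      (fun x y => hdR y x) (fun h1 h2 => htrans h2 h1) W hW hWinf hWS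
    exact hnone ⟨T, hT1, hT2, Or.inr hT3⟩
  have small_down : ∀ {a x : ℕ}, R a x → OrdSmall R x → OrdSmall R a := by
    intro a x hax hx
    exact Set.Finite.subset hx fun y hy hxy => hy (htrans hax hxy)
  have hSinf : {x | OrdSmall R x}.Infinite := by
    by_contra hfin
    rw [Set.not_infinite] at hfin
    obtain ⟨N, hN⟩ := hfin.bddAbove
    set W : ℕ → Bool := fun x => decide (N + 1 ≤ x) with hW_def
    have hWc : Computable W :=
      Primrec.nat_le.decide.to_comp.comp (Computable.const (N + 1)) Computable.id
    have hWinf : {x | W x = true}.Infinite := by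
      have he : {x | W x = true} = Set.Ici (N + 1) := by
        ext x; simp [hW_def]
      rw [he]
      exact Set.Ici_infinite _
    refine noDesc W hWc hWinf ?_
    intro x hx
    rcases htype x with h | h
    · exfalso
      have h1 : x ≤ N := hN h
      have h2 : N + 1 ≤ x := by simpa [hW_def] using hx
      omega
    · exact h
  refine ⟨hSinf, ?_⟩
  intro F hF hdisj htr
  set l : ℕ → List ℕ := fun i =>
      Denumerable.raise' (ofNat (List ℕ) (@Encodable.encode (Finset ℕ) Primcodable.toEncodable (F i))) 0
    with hl_def
  have hlc : Computable l :=
    praise.to_comp.comp ((Computable.ofNat (List ℕ)).comp (Computable.encode.comp hF))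
  have hmem : ∀ i x, x ∈ l i ↔ x ∈ F i := by
    intro i x
    have h := (mem_ofNat_finset (@Encodable.encode (Finset ℕ) Primcodable.toEncodable (F i)) x).symm
    have hb : @Encodable.encode (Finset ℕ) Primcodable.toEncodable (F i)
        = @Encodable.encode (Finset ℕ) Denumerable.toEncodable (F i) := rfl
    rw [hb] at h
    rwa [ofNat_encode (F i)] at h
  have hne : ∀ i, l i ≠ [] := by
    intro i
    obtain ⟨x, hx, _⟩ := htr i
    exact List.ne_nil_of_mem ((hmem i x).mpr hx)
  set m2 : ℕ → ℕ → ℕ := fun x y => bif d (x, y) then x else y with hm2_def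
  have hm2a : ∀ x y, m2 x y = x ∨ m2 x y = y := by
    intro x y
    cases hdxy : d (x, y) <;> simp [hm2_def, hdxy]
  have hm2b : ∀ x y, R (m2 x y) x := by
    intro x y
    cases hdxy : d (x, y) <;> simp only [hm2_def, hdxy, cond_true, cond_false]
    · rcases htot x y with h | h
      · exact absurd ((hdR x y).mpr h) (by simp [hdxy])
      · exact h
    · exact hrefl x
  have hm2c : ∀ x y, R (m2 x y) y := by
    intro x y
    cases hdxy : d (x, y) <;> simp only [hm2_def, hdxy, cond_true, cond_false]
    · exact hrefl y
    · exact (hdR x y).mp hdxy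
  set g : ℕ → ℕ :=
    fun i => Nat.rec ((l i).headI) (fun k ih => m2 ih ((l i).getI (k + 1)))
      ((l i).length - 1) with hg_def
  have hgc : Computable g := by
    have hgetI : Computable fun q : ℕ × (ℕ × ℕ) => (l q.1).getI (q.2.1 + 1) :=
      Primrec.list_getI.to_comp.comp (hlc.comp Computable.fst)
        (Computable.succ.comp (Computable.fst.comp Computable.snd))
    have hd2 : Computable fun q : ℕ × (ℕ × ℕ) => d (q.2.2, (l q.1).getI (q.2.1 + 1)) :=
      hd.comp ((Computable.snd.comp Computable.snd).pair hgetI)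
    exact Computable.nat_rec (Computable.pred.comp (Primrec.list_length.to_comp.comp hlc))
      (Primrec.list_headI.to_comp.comp hlc)
      ((Computable.cond hd2 (Computable.snd.comp Computable.snd) hgetI).to₂)
  have key : ∀ i n, n ≤ (l i).length - 1 →
      ((Nat.rec ((l i).headI) (fun k ih => m2 ih ((l i).getI (k + 1))) n : ℕ) ∈ l i ∧
       ∀ j, j ≤ n → R (Nat.rec ((l i).headI) (fun k ih => m2 ih ((l i).getI (k + 1))) n)
         ((l i).getI j)) := by
    intro i n
    induction n with
    | zero =>
      intro _
      have hmem0 : (l i).headI ∈ l i := by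
        cases hl : l i with
        | nil => exact absurd hl (hne i)
        | cons a t => simp
      refine ⟨hmem0, ?_⟩
      intro j hj
      interval_cases j
      have h0 : (l i).getI 0 = (l i).headI := by
        cases hl : l i with
        | nil => exact absurd hl (hne i)
        | cons a t => simp [List.getI]
      rw [h0]
      exact hrefl _
    | succ n ih =>
      intro hn
      have hlen : 1 ≤ (l i).length := by
        cases hl : l i with
        | nil => exact absurd hl (hne i)
        | cons a t => simp
      have hn' : n ≤ (l i).length - 1 := by omega
      obtain ⟨ihmem, ihR⟩ := ih hn'
      have hidx : n + 1 < (l i).length := by omega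
      have hgetmem : (l i).getI (n + 1) ∈ l i := by
        rw [List.getI_eq_getElem _ hidx]
        exact List.getElem_mem hidx
      constructor
      · show m2 (Nat.rec ((l i).headI) (fun k ih => m2 ih ((l i).getI (k + 1))) n)
          ((l i).getI (n + 1)) ∈ l i
        rcases hm2a (Nat.rec ((l i).headI) (fun k ih => m2 ih ((l i).getI (k + 1))) n)
          ((l i).getI (n + 1)) with h | h
        · rw [h]; exact ihmem
        · rw [h]; exact hgetmem
      · intro j hj
        show R (m2 (Nat.rec ((l i).headI) (fun k ih => m2 ih ((l i).getI (k + 1))) n)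
          ((l i).getI (n + 1))) ((l i).getI j)
        rcases Nat.lt_succ_iff_lt_or_eq.mp (Nat.lt_succ_of_le hj) with hj' | rfl
        · exact htrans (hm2b _ _) (ihR j (by omega))
        · exact hm2c _ _
  have hgmin : ∀ i, g i ∈ F i ∧ ∀ y ∈ F i, R (g i) y := by
    intro i
    obtain ⟨hk1, hk2⟩ := key i ((l i).length - 1) le_rfl
    refine ⟨(hmem i _).mp hk1, ?_⟩
    intro y hy
    obtain ⟨⟨j, hj⟩, rfl⟩ := List.mem_iff_get.mp ((hmem i y).mpr hy)
    have hgj : (l i).get ⟨j, hj⟩ = (l i).getI j := (List.getI_eq_getElem _ hj).symm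
    rw [hgj]
    exact hk2 j (by omega)
  have hgS : ∀ i, OrdSmall R (g i) := by
    intro i
    obtain ⟨x, hxF, hxS⟩ := htr i
    exact small_down ((hgmin i).2 x hxF) hxS
  have hginj : Function.Injective g := by
    intro i j hij
    by_contra hne'
    have h1 : g i ∈ F j := by rw [hij]; exact (hgmin j).1
    exact (Finset.disjoint_left.mp (hdisj i j hne')) (hgmin i).1 h1
  have hgub : ∀ a, ∃ k, a < g k := by
    intro a
    obtain ⟨b', hb', hab⟩ := inf_exists_gt (Set.infinite_range_of_injective hginj) a
    obtain ⟨k, rfl⟩ := hb'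
    exact ⟨k, hab⟩
  set q : ℕ → ℕ → Bool := fun a k => decide (a < g k) with hq_def
  have hqc : Computable₂ q :=
    (Primrec.nat_lt.decide.to_comp.comp Computable.fst (hgc.comp Computable.snd)).to₂
  have Hq : ∀ a, ∃ k, q a k = true := by
    intro a
    obtain ⟨k, hk⟩ := hgub a
    exact ⟨k, by simp [hq_def, hk]⟩
  set s3 : ℕ → ℕ := fun a => g (Nat.find (Hq a)) with hs3_def
  have hs3c : Computable s3 := hgc.comp (computable_find hqc Hq)
  have hs3gt : ∀ a, a < s3 a := by
    intro a
    have h := Nat.find_spec (Hq a)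
    have h' : a < g (Nat.find (Hq a)) := by simpa [hq_def] using h
    exact h'
  set b : ℕ → ℕ := fun n => Nat.rec (g 0) (fun _ ih => s3 ih) n with hb2_def
  have hbc : Computable b := computable_iter hs3c (g 0)
  have hbm : StrictMono b := strictMono_nat_of_lt_succ fun n => hs3gt (b n)
  have hbS : ∀ n, OrdSmall R (b n) := by
    intro n
    cases n with
    | zero => exact hgS 0
    | succ n => exact hgS _
  obtain ⟨V, hVc, hViff⟩ := computable_range_mem hbc hbm
  refine noAsc V hVc ?_ ?_
  · have he : {x | V x = true} = Set.range b := Set.ext fun x => hViff x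
    rw [he]
    exact Set.infinite_range_of_injective hbm.injective
  · intro x hx
    obtain ⟨n, rfl⟩ := (hViff x).mp hx
    exact hbS n

end HyperimmuneHelpers

/-- A computable linear order of type ω + ω* with no computable infinite ascending or
descending sequence has hyperimmune ω-part and ω*-part. -/
theorem omega_omegaStar_parts_hyperimmune (R : ℕ → ℕ → Prop)
    (hcomp : ComputablePred (fun p : ℕ × ℕ => R p.1 p.2))
    (hpo : IsPartialOrder ℕ R) (htot : ∀ x y, R x y ∨ R y x)
    (htype : ∀ x, OrdSmall R x ∨ OrdLarge R x)
    (hnone : ¬ ∃ S : Set ℕ, S.Infinite ∧ ComputablePred (· ∈ S) ∧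
      ((∀ x ∈ S, ∀ y ∈ S, x < y → R x y ∧ x ≠ y) ∨
        (∀ x ∈ S, ∀ y ∈ S, x < y → R y x ∧ x ≠ y))) :
    Hyperimmune {x | OrdSmall R x} ∧ Hyperimmune {x | OrdLarge R x} := by
  classical
  obtain ⟨f, hfc, hfeq⟩ := ComputablePred.computable_iff.mp hcomp
  have hdR : ∀ x y, f (x, y) = true ↔ R x y := by
    intro x y
    exact (congrFun hfeq (x, y)).to_iff.symm
  have hrefl : ∀ x, R x x := hpo.refl
  have htrans : ∀ {x y z : ℕ}, R x y → R y z → R x z := fun h1 h2 => hpo.trans _ _ _ h1 h2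
  constructor
  · exact half R f hfc hdR hrefl @htrans htot htype hnone
  · have hnone' : ¬ ∃ S : Set ℕ, S.Infinite ∧ ComputablePred (· ∈ S) ∧
        ((∀ x ∈ S, ∀ y ∈ S, x < y → (fun x y => R y x) x y ∧ x ≠ y) ∨
          (∀ x ∈ S, ∀ y ∈ S, x < y → (fun x y => R y x) y x ∧ x ≠ y)) := by
      rintro ⟨S, h1, h2, h3⟩
      exact hnone ⟨S, h1, h2, h3.symm⟩
    exact half (fun x y => R y x) (fun p => f (p.2, p.1))
      (hfc.comp (Computable.snd.pair Computable.fst))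
      (fun x y => hdR y x) hrefl (fun h1 h2 => htrans h2 h1)
      (fun x y => (htot x y).symm) (fun x => (htype x).symm) hnone'
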